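/- Let u_p be the positive radial solution of -Δu = |x|^α u^p in the unit ball B ⊂ ℝ^N with Dirichlet boundary conditions, N ≥ 3, α > 0, 1 < p < (N+2+2α)/(N-2). Then for every radial function v ∈ H¹₀(B), written in radial coordinates, the inequality ∫₀¹ r^{N-1}(v')² dr - p∫₀¹ r^{N-1+α} u_p^{p-1} v² dr + (p-1) (∫₀¹ r^{N-1+α} u_p^p v dr)² / ∫₀¹ r^{N-1+α} u_p^{p+1} dr ≥ 0. -/

import Mathlib

open Set intervalIntegral MeasureTheory Filter Topology

namespace Stmt11Aux

structure Pack (N : ℕ) (α p : ℝ) (u : ℝ → ℝ) : Prop where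
  hN : 3 ≤ N
  hα : 0 < α
  hp : 1 < p
  hpα : p < ((N : ℝ) + 2 + 2 * α) / ((N : ℝ) - 2)
  hu : ContDiff ℝ 2 u
  hODE : ∀ r ∈ Ioo (0:ℝ) 1,
      deriv (fun s => s ^ ((N:ℝ) - 1) * deriv u s) r = -(r ^ ((N:ℝ) - 1 + α) * u r ^ p)
  hu'0 : deriv u 0 = 0
  hu1 : u 1 = 0
  hupos : ∀ r ∈ Ico (0:ℝ) 1, 0 < u r


theorem cont_rpow (q : ℝ) (hq : 0 ≤ q) : Continuous fun x : ℝ => x ^ q := by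
  rw [continuous_iff_continuousAt]
  intro x
  exact Real.continuousAt_rpow_const x q (Or.inr hq)

theorem primitive_hasDerivAt {f : ℝ → ℝ} (hf : Continuous f) (a x : ℝ) :
    HasDerivAt (fun b => ∫ t in a..b, f t) (f x) x :=
  (hf.integral_hasStrictDerivAt a x).hasDerivAt

theorem monoIcc {f : ℝ → ℝ} {a b : ℝ} (hcont : ContinuousOn f (Icc a b))
    (hder : ∀ x ∈ Ioo a b, ∃ d, HasDerivAt f d x ∧ 0 ≤ d) : MonotoneOn f (Icc a b) := by
  apply monotoneOn_of_deriv_nonneg (convex_Icc a b) hcont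
  · intro x hx
    rw [interior_Icc] at hx
    obtain ⟨d, hd, _⟩ := hder x hx
    exact hd.differentiableAt.differentiableWithinAt
  · intro x hx
    rw [interior_Icc] at hx
    obtain ⟨d, hd, hd0⟩ := hder x hx
    rwa [hd.deriv]

theorem constIcc {f : ℝ → ℝ} {a b : ℝ} (hcont : ContinuousOn f (Icc a b))
    (hder : ∀ x ∈ Ioo a b, HasDerivAt f 0 x) : ∀ x ∈ Icc a b, f x = f a := by
  have h1 : MonotoneOn f (Icc a b) := monoIcc hcont (fun x hx => ⟨0, hder x hx, le_refl 0⟩)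
  have h2 : MonotoneOn (fun y => -f y) (Icc a b) := monoIcc hcont.neg
    (fun x hx => ⟨0, (hder x hx).neg.congr_deriv (by norm_num), le_refl 0⟩)
  intro x hx
  by_cases hab : a ≤ b
  · have ha : a ∈ Icc a b := ⟨le_refl a, hab⟩
    have := h1 ha hx hx.1
    have := h2 ha hx hx.1
    simp at *; linarith
  · exact absurd (hx.1.trans hx.2) hab

/-- the flux `E(r) = r^(N-1) u'(r)` -/
noncomputable def EE (N : ℕ) (u : ℝ → ℝ) : ℝ → ℝ := fun r => r ^ ((N:ℝ)-1) * deriv u r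

/-- the nonlinear term `s^(N-1+α) u(s)^p` -/
noncomputable def RHS (N : ℕ) (α p : ℝ) (u : ℝ → ℝ) : ℝ → ℝ :=
  fun s => s ^ ((N:ℝ)-1+α) * u s ^ p


/-- `T(r) = -r u'(r)/u(r)` -/
noncomputable def TT (u : ℝ → ℝ) : ℝ → ℝ := fun r => -(r * deriv u r) / u r

/-- `h(r) = r^(2+α) u(r)^(p-1)` -/
noncomputable def hh (α p : ℝ) (u : ℝ → ℝ) : ℝ → ℝ := fun r => r ^ (2+α) * u r ^ (p-1)

/-- `γ = (2+α)/(p-1)` -/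
noncomputable def γγ (α p : ℝ) : ℝ := (2+α)/(p-1)

/-- the barrier `B = h - (p+1)/2 * T(N-2-T)` -/
noncomputable def BB (N : ℕ) (α p : ℝ) (u : ℝ → ℝ) : ℝ → ℝ :=
  fun r => hh α p u r - ((p+1)/2) * (TT u r * (((N:ℝ)-2) - TT u r))


/-- the zero mode `w = γ u + r u'` of the linearized operator -/
noncomputable def ww (α p : ℝ) (u : ℝ → ℝ) : ℝ → ℝ :=
  fun r => γγ α p * u r + r * deriv u r

/-- flux of the zero mode: `Z = r^(N-1) w'` -/
noncomputable def ZZ (N : ℕ) (α p : ℝ) (u : ℝ → ℝ) : ℝ → ℝ :=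
  fun r => r ^ ((N:ℝ)-1) * deriv (ww α p u) r

namespace Pack

variable {N : ℕ} {α p : ℝ} {u : ℝ → ℝ}

theorem hN3 (P : Pack N α p u) : (3:ℝ) ≤ (N:ℝ) := by exact_mod_cast P.hN
theorem hc2 (P : Pack N α p u) : (2:ℝ) ≤ (N:ℝ) - 1 := by have := P.hN3; linarith
theorem hc0 (P : Pack N α p u) : (0:ℝ) < (N:ℝ) - 1 := by have := P.hc2; linarith
theorem hN2 (P : Pack N α p u) : (0:ℝ) < (N:ℝ) - 2 := by have := P.hN3; linarith
theorem hp0 (P : Pack N α p u) : (0:ℝ) < p := by have := P.hp; linarith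
theorem hp1 (P : Pack N α p u) : (0:ℝ) < p - 1 := by have := P.hp; linarith
/-- subcriticality, form 1 : `(p+1)/2 * (N-2) < N + α` -/
theorem hsub1 (P : Pack N α p u) : ((p+1)/2) * ((N:ℝ)-2) < (N:ℝ) + α := by
  have h2 := P.hN2
  have key : p * ((N:ℝ) - 2) < (N:ℝ) + 2 + 2*α := by
    calc p * ((N:ℝ)-2) = ((N:ℝ)-2) * p := by ring
    _ < ((N:ℝ)-2) * (((N:ℝ) + 2 + 2 * α) / ((N:ℝ) - 2)) := mul_lt_mul_of_pos_left P.hpα h2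
    _ = (N:ℝ) + 2 + 2*α := by field_simp
  nlinarith
/-- subcriticality, form 2 : `(N-2)/2 < γ = (2+α)/(p-1)` -/
theorem hγsub (P : Pack N α p u) : ((N:ℝ)-2)/2 < (2+α)/(p-1) := by
  have h2 := P.hN2
  have hp1 := P.hp1
  rw [div_lt_div_iff₀ (by norm_num) hp1]
  have : p * ((N:ℝ) - 2) < (N:ℝ) + 2 + 2*α := by
    have := P.hpα
    calc p * ((N:ℝ)-2) = ((N:ℝ)-2) * p := by ring
    _ < ((N:ℝ)-2) * (((N:ℝ) + 2 + 2 * α) / ((N:ℝ) - 2)) := by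
        exact mul_lt_mul_of_pos_left this h2
    _ = (N:ℝ) + 2 + 2*α := by field_simp
  nlinarith

theorem ucont (P : Pack N α p u) : Continuous u := P.hu.continuous
theorem udiff (P : Pack N α p u) : Differentiable ℝ u := P.hu.differentiable (by norm_num)
theorem u'contdiff (P : Pack N α p u) : ContDiff ℝ 1 (deriv u) := by
  exact ((contDiff_succ_iff_deriv (n := 1)).mp (by exact_mod_cast P.hu)).2.2
theorem u'cont (P : Pack N α p u) : Continuous (deriv u) := P.u'contdiff.continuous
theorem u'diff (P : Pack N α p u) : Differentiable ℝ (deriv u) := P.u'contdiff.differentiable (by norm_num)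


theorem ucont_rpow (P : Pack N α p u) {q : ℝ} (hq : 0 ≤ q) :
    Continuous fun r => u r ^ q := (cont_rpow q hq).comp P.ucont

theorem RHScont (P : Pack N α p u) : Continuous (RHS N α p u) := by
  have h1 : (0:ℝ) ≤ (N:ℝ)-1+α := by have := P.hc0; have := P.hα; linarith
  exact (cont_rpow _ h1).mul (P.ucont_rpow (le_of_lt P.hp0))

theorem EEcont (P : Pack N α p u) : Continuous (EE N u) :=
  (cont_rpow _ (le_of_lt P.hc0)).mul P.u'cont

theorem EEderiv (P : Pack N α p u) : ∀ r ∈ Ioo (0:ℝ) 1,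
    HasDerivAt (EE N u) (-(RHS N α p u r)) r := by
  intro r hr
  have hr0 : r ≠ 0 := ne_of_gt hr.1
  have h1 : HasDerivAt (fun s : ℝ => s ^ ((N:ℝ)-1)) (((N:ℝ)-1) * r ^ ((N:ℝ)-1-1)) r :=
    Real.hasDerivAt_rpow_const (Or.inl hr0)
  have h2 : HasDerivAt (deriv u) (deriv (deriv u) r) r := (P.u'diff r).hasDerivAt
  have h3 := h1.mul h2
  have h4 : deriv (EE N u) r = -(RHS N α p u r) := P.hODE r hr
  have h5 : deriv (EE N u) r = ((N:ℝ)-1) * r ^ ((N:ℝ)-1-1) * deriv u r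
      + r ^ ((N:ℝ)-1) * deriv (deriv u) r := h3.deriv
  rw [h4] at h5
  rw [show -(RHS N α p u r) = ((N:ℝ)-1) * r ^ ((N:ℝ)-1-1) * deriv u r
      + r ^ ((N:ℝ)-1) * deriv (deriv u) r from h5]
  exact h3

/-- the integrated ODE -/
theorem EEeq (P : Pack N α p u) :
    ∀ r ∈ Icc (0:ℝ) 1, EE N u r = -∫ s in (0:ℝ)..r, RHS N α p u s := by
  have key : ∀ x ∈ Icc (0:ℝ) 1,
      EE N u x + ∫ s in (0:ℝ)..x, RHS N α p u s
        = EE N u 0 + ∫ s in (0:ℝ)..(0:ℝ), RHS N α p u s := by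
    apply constIcc
    · exact (P.EEcont.add (intervalIntegral.continuous_primitive
        (fun a b => P.RHScont.intervalIntegrable a b) 0)).continuousOn
    · intro x hx
      have h1 := P.EEderiv x hx
      have h2 := primitive_hasDerivAt P.RHScont 0 x
      have := h1.add h2
      exact this.congr_deriv (by simp)
  intro r hr
  have h0 : EE N u 0 = 0 := by
    simp only [EE]
    rw [Real.zero_rpow (ne_of_gt P.hc0)]
    ring
  have := key r hr
  rw [h0] at this
  simp at this
  linarith [this]

theorem RHSpos (P : Pack N α p u) {s : ℝ} (hs0 : 0 < s) (hs1 : s < 1) :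
    0 < RHS N α p u s := by
  have h1 : (0:ℝ) < s ^ ((N:ℝ)-1+α) := Real.rpow_pos_of_pos hs0 _
  have h2 : 0 < u s ^ p := Real.rpow_pos_of_pos (P.hupos s ⟨le_of_lt hs0, hs1⟩) _
  exact mul_pos h1 h2

theorem intpos (P : Pack N α p u) {r : ℝ} (hr0 : 0 < r) (hr1 : r ≤ 1) :
    0 < ∫ s in (0:ℝ)..r, RHS N α p u s := by
  apply intervalIntegral_pos_of_pos_on (P.RHScont.intervalIntegrable 0 r)
  · intro x hx
    exact P.RHSpos hx.1 (lt_of_lt_of_le hx.2 hr1)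
  · exact hr0

theorem u'neg (P : Pack N α p u) {r : ℝ} (hr0 : 0 < r) (hr1 : r ≤ 1) :
    deriv u r < 0 := by
  have h1 := P.EEeq r ⟨le_of_lt hr0, hr1⟩
  have h2 := P.intpos hr0 hr1
  have h3 : (0:ℝ) < r ^ ((N:ℝ)-1) := Real.rpow_pos_of_pos hr0 _
  have h4 : r ^ ((N:ℝ)-1) * deriv u r < 0 := by
    simp only [EE] at h1; rw [h1]; linarith
  by_contra h
  push_neg at h
  nlinarith

theorem uanti (P : Pack N α p u) : AntitoneOn u (Icc (0:ℝ) 1) := by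
  have := monoIcc (f := fun y => -u y) (a := 0) (b := 1) P.ucont.neg.continuousOn ?_
  · intro x hx y hy hxy
    have := this hx hy hxy
    simpa using this
  · intro x hx
    exact ⟨-(deriv u x), ((P.udiff x).hasDerivAt).neg, by
      have := P.u'neg hx.1 (le_of_lt hx.2); linarith⟩

theorem unonneg (P : Pack N α p u) {r : ℝ} (hr : r ∈ Icc (0:ℝ) 1) : 0 ≤ u r := by
  rcases eq_or_lt_of_le hr.2 with h | h
  · rw [h, P.hu1]
  · exact le_of_lt (P.hupos r ⟨hr.1, h⟩)


theorem upos (P : Pack N α p u) {r : ℝ} (hr : r ∈ Ioo (0:ℝ) 1) : 0 < u r :=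
  P.hupos r ⟨le_of_lt hr.1, hr.2⟩

theorem Tpos (P : Pack N α p u) {r : ℝ} (hr : r ∈ Ioo (0:ℝ) 1) : 0 < TT u r := by
  have h1 := P.u'neg hr.1 (le_of_lt hr.2)
  have h2 := P.upos hr
  have h3 : 0 < -(r * deriv u r) := by nlinarith [hr.1]
  exact div_pos h3 h2

theorem hpos (P : Pack N α p u) {r : ℝ} (hr : r ∈ Ioo (0:ℝ) 1) : 0 < hh α p u r :=
  mul_pos (Real.rpow_pos_of_pos hr.1 _) (Real.rpow_pos_of_pos (P.upos hr) _)

theorem odeExpand (P : Pack N α p u) {r : ℝ} (hr : r ∈ Ioo (0:ℝ) 1) :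
    ((N:ℝ)-1) * r ^ ((N:ℝ)-1-1) * deriv u r + r ^ ((N:ℝ)-1) * deriv (deriv u) r
      = -(RHS N α p u r) := by
  have hr0 : r ≠ 0 := ne_of_gt hr.1
  have h1 : HasDerivAt (fun s : ℝ => s ^ ((N:ℝ)-1)) (((N:ℝ)-1) * r ^ ((N:ℝ)-1-1)) r :=
    Real.hasDerivAt_rpow_const (Or.inl hr0)
  have h2 : HasDerivAt (deriv u) (deriv (deriv u) r) r := (P.u'diff r).hasDerivAt
  have h3 := h1.mul h2
  have h5 : deriv (fun s : ℝ => s ^ ((N:ℝ)-1) * deriv u s) r = _ := h3.deriv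
  have h4 := P.hODE r hr
  rw [h5] at h4
  simp only [RHS]
  exact h4

theorem Tderiv (P : Pack N α p u) {r : ℝ} (hr : r ∈ Ioo (0:ℝ) 1) :
    HasDerivAt (TT u)
      ((hh α p u r + TT u r^2 - ((N:ℝ)-2) * TT u r) / r) r := by
  have hr0 : (0:ℝ) < r := hr.1
  have hu0 : (0:ℝ) < u r := P.upos hr
  have hn : HasDerivAt (fun s => -(s * deriv u s))
      (-(deriv u r + r * deriv (deriv u) r)) r := by
    have := ((hasDerivAt_id r).mul ((P.u'diff r).hasDerivAt)).neg
    simp only [id_eq] at this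
    refine this.congr_deriv ?_
    ring
  have hd : HasDerivAt (TT u)
      ((-(deriv u r + r * deriv (deriv u) r) * u r
        - (-(r * deriv u r)) * deriv u r) / (u r)^2) r :=
    hn.div ((P.udiff r).hasDerivAt) (ne_of_gt hu0)
  convert hd using 1
  -- now an algebraic identity using the ODE
  have hA : (0:ℝ) < r ^ ((N:ℝ)-1) := Real.rpow_pos_of_pos hr0 _
  have e1 : r ^ ((N:ℝ)-1-1) = r ^ ((N:ℝ)-1) / r := Real.rpow_sub_one (ne_of_gt hr0) _
  have e2 : r ^ ((N:ℝ)-1+α) = r ^ ((N:ℝ)-1) * r ^ α := Real.rpow_add hr0 _ _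
  have e3 : u r ^ p = u r ^ (p-1) * u r := by
    rw [← Real.rpow_add_one (ne_of_gt hu0) (p-1)]
    norm_num
  have e4 : r ^ ((2:ℝ)+α) = r^(2:ℝ) * r ^ α := Real.rpow_add hr0 _ _
  have e5 : r ^ (2:ℝ) = r * r := by
    rw [show (2:ℝ) = ((2:ℕ):ℝ) by norm_num, Real.rpow_natCast]; ring
  have hode := P.odeExpand hr
  simp only [RHS, TT, hh] at *
  rw [e1] at hode
  rw [e2, e3] at hode
  -- solve for deriv (deriv u) r
  have hdd : deriv (deriv u) r =
      (-(r ^ ((N:ℝ)-1) * r ^ α * (u r ^ (p-1) * u r))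
        - ((N:ℝ)-1) * (r ^ ((N:ℝ)-1) / r) * deriv u r) / r ^ ((N:ℝ)-1) := by
    field_simp at hode ⊢
    linarith [hode]
  rw [hdd, e4, e5]
  field_simp
  ring

theorem hderiv (P : Pack N α p u) {r : ℝ} (hr : r ∈ Ioo (0:ℝ) 1) :
    HasDerivAt (hh α p u)
      ((p-1) * hh α p u r * (γγ α p - TT u r) / r) r := by
  have hr0 : (0:ℝ) < r := hr.1
  have hu0 : (0:ℝ) < u r := P.upos hr
  have h1 : HasDerivAt (fun s : ℝ => s ^ ((2:ℝ)+α)) (((2:ℝ)+α) * r ^ ((2:ℝ)+α-1)) r :=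
    Real.hasDerivAt_rpow_const (Or.inl (ne_of_gt hr0))
  have h2 : HasDerivAt (fun s => u s ^ (p-1))
      (deriv u r * (p-1) * u r ^ (p-1-1)) r :=
    HasDerivAt.rpow_const ((P.udiff r).hasDerivAt) (Or.inl (ne_of_gt hu0))
  have h3 := h1.mul h2
  refine h3.congr_deriv ?_
  have e1 : r ^ ((2:ℝ)+α-1) = r ^ ((2:ℝ)+α) / r := Real.rpow_sub_one (ne_of_gt hr0) _
  have e2 : u r ^ (p-1-1) = u r ^ (p-1) / u r := Real.rpow_sub_one (ne_of_gt hu0) _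
  simp only [hh, TT, γγ]
  rw [e1, e2]
  have hp1 : p - 1 ≠ 0 := ne_of_gt P.hp1
  field_simp
  ring


theorem Tformula (P : Pack N α p u) {r : ℝ} (hr : r ∈ Ioo (0:ℝ) 1) :
    TT u r = (∫ s in (0:ℝ)..r, RHS N α p u s) / (r ^ ((N:ℝ)-2) * u r) := by
  have hE := P.EEeq r ⟨le_of_lt hr.1, le_of_lt hr.2⟩
  simp only [EE] at hE
  have e1 : r ^ ((N:ℝ)-1) = r ^ ((N:ℝ)-2) * r := by
    rw [show ((N:ℝ)-1) = ((N:ℝ)-2)+1 by ring, Real.rpow_add_one (ne_of_gt hr.1)]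
  rw [e1] at hE
  simp only [TT]
  have h2 : (0:ℝ) < r ^ ((N:ℝ)-2) := Real.rpow_pos_of_pos hr.1 _
  have hu0 := P.upos hr
  rw [div_eq_div_iff (ne_of_gt hu0) (by positivity)]
  nlinarith [hE]

theorem Tbound (P : Pack N α p u) {r : ℝ} (hr : r ∈ Ioo (0:ℝ) 1) :
    TT u r * (((N:ℝ)+α) * u r ^ p) ≤ hh α p u r * u 0 ^ p := by
  have hNα : (0:ℝ) < (N:ℝ)+α := by have := P.hN3; have := P.hα; linarith
  have hu0 := P.upos hr
  have hU0 : (0:ℝ) < u 0 := P.hupos 0 ⟨le_refl 0, by norm_num⟩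
  have h2 : (0:ℝ) < r ^ ((N:ℝ)-2) := Real.rpow_pos_of_pos hr.1 _
  -- the integral bound
  have key : (∫ s in (0:ℝ)..r, RHS N α p u s) * ((N:ℝ)+α) ≤ u 0 ^ p * r ^ ((N:ℝ)+α) := by
    have mono : (∫ s in (0:ℝ)..r, RHS N α p u s)
        ≤ ∫ s in (0:ℝ)..r, u 0 ^ p * s ^ ((N:ℝ)-1+α) := by
      apply intervalIntegral.integral_mono_on (le_of_lt hr.1)
        (P.RHScont.intervalIntegrable 0 r)
        ((continuous_const.mul (cont_rpow _ (by have := P.hc0; have := P.hα; linarith))).intervalIntegrable 0 r)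
      intro s hs
      simp only [RHS, Pi.mul_apply]
      rw [mul_comm (u 0 ^ p)]
      apply mul_le_mul_of_nonneg_left _ (Real.rpow_nonneg hs.1 _)
      apply Real.rpow_le_rpow (P.unonneg ⟨hs.1, le_trans hs.2 (le_of_lt hr.2)⟩)
        (P.uanti ⟨le_refl 0, by norm_num⟩ ⟨hs.1, le_trans hs.2 (le_of_lt hr.2)⟩ hs.1)
        (le_of_lt P.hp0)
    have eval : (∫ s in (0:ℝ)..r, u 0 ^ p * s ^ ((N:ℝ)-1+α))
        = u 0 ^ p * (r ^ ((N:ℝ)+α) / ((N:ℝ)+α)) := by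
      rw [intervalIntegral.integral_const_mul, integral_rpow
        (Or.inl (by have := P.hc0; have := P.hα; linarith))]
      rw [show ((N:ℝ)-1+α+1) = (N:ℝ)+α by ring]
      rw [Real.zero_rpow (ne_of_gt hNα)]
      ring
    rw [eval] at mono
    calc (∫ s in (0:ℝ)..r, RHS N α p u s) * ((N:ℝ)+α)
        ≤ (u 0 ^ p * (r ^ ((N:ℝ)+α) / ((N:ℝ)+α))) * ((N:ℝ)+α) :=
          mul_le_mul_of_nonneg_right mono (le_of_lt hNα)
      _ = u 0 ^ p * r ^ ((N:ℝ)+α) := by field_simp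
  rw [P.Tformula hr]
  have e3 : u r ^ p = u r ^ (p-1) * u r := by
    rw [← Real.rpow_add_one (ne_of_gt hu0) (p-1)]; norm_num
  have e4 : r ^ ((N:ℝ)+α) = r ^ ((2:ℝ)+α) * r ^ ((N:ℝ)-2) := by
    rw [← Real.rpow_add hr.1]; ring_nf
  rw [div_mul_eq_mul_div, div_le_iff₀ (by positivity)]
  simp only [hh]
  have hX : (0:ℝ) ≤ u r ^ (p-1) := Real.rpow_nonneg (le_of_lt hu0) _
  calc (∫ s in (0:ℝ)..r, RHS N α p u s) * (((N:ℝ)+α) * u r ^ p)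
      = ((∫ s in (0:ℝ)..r, RHS N α p u s) * ((N:ℝ)+α)) * (u r ^ (p-1) * u r) := by
        rw [e3]; ring
    _ ≤ (u 0 ^ p * r ^ ((N:ℝ)+α)) * (u r ^ (p-1) * u r) := by
        apply mul_le_mul_of_nonneg_right key (by positivity)
    _ = r ^ ((2:ℝ)+α) * u r ^ (p-1) * u 0 ^ p * (r ^ ((N:ℝ)-2) * u r) := by
        rw [e4]; ring

theorem Bpos_near0 (P : Pack N α p u) :
    ∃ δ : ℝ, 0 < δ ∧ ∀ r ∈ Ioo (0:ℝ) 1, r < δ → 0 < BB N α p u r := by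
  have hU0 : (0:ℝ) < u 0 := P.hupos 0 ⟨le_refl 0, by norm_num⟩
  have hU0p : (0:ℝ) < u 0 ^ p := Real.rpow_pos_of_pos hU0 _
  have hNα : (0:ℝ) < (N:ℝ)+α := by have := P.hN3; have := P.hα; linarith
  have hθ := P.hsub1
  have hcont : ContinuousAt (fun r => ((N:ℝ)+α) * u r ^ p) 0 :=
    (continuous_const.mul (P.ucont_rpow (le_of_lt P.hp0))).continuousAt
  have hlt : ((p+1)/2) * ((N:ℝ)-2) * u 0 ^ p < ((N:ℝ)+α) * u 0 ^ p :=
    mul_lt_mul_of_pos_right hθ hU0p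
  have hev : ∀ᶠ r in 𝓝 (0:ℝ), ((p+1)/2) * ((N:ℝ)-2) * u 0 ^ p < ((N:ℝ)+α) * u r ^ p :=
    hcont.eventually_const_lt hlt
  obtain ⟨δ, hδpos, hδ⟩ := Metric.eventually_nhds_iff.mp hev
  refine ⟨δ, hδpos, ?_⟩
  intro r hr hrδ
  have h1 : ((p+1)/2) * ((N:ℝ)-2) * u 0 ^ p < ((N:ℝ)+α) * u r ^ p := by
    apply hδ
    rw [Real.dist_eq, sub_zero, abs_of_pos hr.1]
    exact hrδ
  have hT := P.Tpos hr
  have hh0 := P.hpos hr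
  have hTb := P.Tbound hr
  have hupp : (0:ℝ) < u r ^ p := Real.rpow_pos_of_pos (P.upos hr) _
  simp only [BB]
  have h3 : (p+1)/2 * ((N:ℝ)-2) * TT u r * u 0 ^ p < hh α p u r * u 0 ^ p := by
    nlinarith [mul_lt_mul_of_pos_right h1 hT, hTb]
  have h4 : (p+1)/2 * ((N:ℝ)-2) * TT u r < hh α p u r :=
    lt_of_mul_lt_mul_right h3 (le_of_lt hU0p)
  have h5 : (0:ℝ) ≤ (p+1)/2 * (TT u r * TT u r) := by
    apply mul_nonneg (by linarith [P.hp1]) (mul_nonneg (le_of_lt hT) (le_of_lt hT))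
  nlinarith [h4, h5]


theorem hhcont (P : Pack N α p u) : Continuous (hh α p u) :=
  (cont_rpow _ (by have := P.hα; linarith)).mul (P.ucont_rpow (le_of_lt P.hp1))

theorem TcontOn (P : Pack N α p u) : ContinuousOn (TT u) (Ico (0:ℝ) 1) := by
  apply ContinuousOn.div
  · exact ((continuous_id.mul P.u'cont).neg).continuousOn
  · exact P.ucont.continuousOn
  · exact fun x hx => ne_of_gt (P.hupos x hx)

theorem BcontOn (P : Pack N α p u) : ContinuousOn (BB N α p u) (Ico (0:ℝ) 1) := by
  apply ContinuousOn.sub (P.hhcont.continuousOn)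
  exact continuousOn_const.mul (P.TcontOn.mul (continuousOn_const.sub P.TcontOn))

theorem Bpos (P : Pack N α p u) : ∀ r ∈ Ioo (0:ℝ) 1, 0 < BB N α p u r := by
  obtain ⟨δ, hδpos, hδ⟩ := P.Bpos_near0
  by_contra hcon
  push_neg at hcon
  obtain ⟨rb, hrb, hBrb⟩ := hcon
  have hδrb : δ ≤ rb := by
    by_contra hh'
    push_neg at hh'
    exact absurd (hδ rb hrb hh') (by linarith)
  set S : Set ℝ := {x | x ∈ Icc δ rb ∧ BB N α p u x ≤ 0} with hS
  have hSclosed : IsClosed S := by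
    have : S = Icc δ rb ∩ (BB N α p u) ⁻¹' (Iic 0) := by
      ext x
      simp only [hS, Set.mem_setOf_eq, Set.mem_inter_iff, Set.mem_preimage, Set.mem_Iic]
    rw [this]
    apply (P.BcontOn.mono ?_).preimage_isClosed_of_isClosed isClosed_Icc isClosed_Iic
    intro x hx
    exact ⟨le_trans (le_of_lt hδpos) hx.1, lt_of_le_of_lt hx.2 hrb.2⟩
  have hSne : S.Nonempty := ⟨rb, ⟨hδrb, le_refl rb⟩, hBrb⟩
  have hSbdd : BddBelow S := ⟨δ, fun x hx => hx.1.1⟩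
  set rs := sInf S with hrs
  have hrsS : rs ∈ S := hSclosed.csInf_mem hSne hSbdd
  have hrs0 : 0 < rs := lt_of_lt_of_le hδpos hrsS.1.1
  have hrs1 : rs < 1 := lt_of_le_of_lt hrsS.1.2 hrb.2
  have hrsI : rs ∈ Ioo (0:ℝ) 1 := ⟨hrs0, hrs1⟩
  have hleft : ∀ x, 0 < x → x < rs → 0 < BB N α p u x := by
    intro x hx0 hxrs
    have hx1 : x < 1 := lt_trans hxrs hrs1
    by_cases hxδ : x < δ
    · exact hδ x ⟨hx0, hx1⟩ hxδ
    · push_neg at hxδ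
      by_contra hBx
      push_neg at hBx
      have hxS : x ∈ S := ⟨⟨hxδ, le_trans (le_of_lt hxrs) hrsS.1.2⟩, hBx⟩
      exact absurd (csInf_le hSbdd hxS) (not_le.mpr hxrs)
  have hB0 : BB N α p u rs = 0 := by
    refine le_antisymm hrsS.2 ?_
    have hca : ContinuousAt (BB N α p u) rs :=
      P.BcontOn.continuousAt (Ico_mem_nhds hrs0 hrs1)
    have htd : Tendsto (BB N α p u) (𝓝[<] rs) (𝓝 (BB N α p u rs)) :=
      (hca.continuousWithinAt).tendsto
    refine ge_of_tendsto htd ?_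
    filter_upwards [Ioo_mem_nhdsLT_of_mem (⟨hrs0, le_refl rs⟩ : rs ∈ Ioc 0 rs)] with x hx
    exact le_of_lt (hleft x hx.1 hx.2)
  -- compute the derivative of B at rs
  have hTd := P.Tderiv hrsI
  have hhd := P.hderiv hrsI
  set T := TT u rs with hT
  set H := hh α p u rs with hH
  set DT := (H + T^2 - ((N:ℝ)-2) * T) / rs with hDT
  set DH := (p-1) * H * (γγ α p - T) / rs with hDH
  have hBd : HasDerivAt (BB N α p u)
      (DH - (p+1)/2 * (DT * (((N:ℝ)-2) - T) + T * (0 - DT))) rs := by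
    exact hhd.sub (((hTd.mul ((hasDerivAt_const rs (((N:ℝ)-2))).sub hTd))).const_mul ((p+1)/2))
  have hHeq : H = (p+1)/2 * (T * (((N:ℝ)-2) - T)) := by
    have := hB0
    simp only [BB] at this
    rw [← hH, ← hT] at this
    linarith
  have hTpos : 0 < T := P.Tpos hrsI
  have hHpos : 0 < H := P.hpos hrsI
  have hK : (0:ℝ) < (p+1)/2 := by linarith [P.hp1]
  have hX : 0 < T * (((N:ℝ)-2) - T) := by nlinarith [hHpos, hHeq]
  have hN0T : 0 < ((N:ℝ)-2) - T := by nlinarith [hX, hTpos]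
  have hγ2 : 0 < γγ α p - ((N:ℝ)-2)/2 := by
    have := P.hγsub
    simp only [γγ]
    linarith
  -- the derivative is positive
  have hb'pos : 0 < DH - (p+1)/2 * (DT * (((N:ℝ)-2) - T) + T * (0 - DT)) := by
    have heq : DH - (p+1)/2 * (DT * (((N:ℝ)-2) - T) + T * (0 - DT))
        = (p+1)/2 * T * (((N:ℝ)-2) - T) * ((p-1) * (γγ α p - ((N:ℝ)-2)/2)) / rs := by
      rw [hDH, hDT, hHeq]
      field_simp
      ring
    rw [heq]
    apply div_pos _ hrs0
    apply mul_pos (mul_pos (mul_pos (by linarith [P.hp1]) hTpos) hN0T)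
    exact mul_pos P.hp1 hγ2
  -- but the derivative must be ≤ 0 since B > 0 to the left and B rs = 0
  have hslope : Tendsto (slope (BB N α p u) rs) (𝓝[<] rs)
      (𝓝 (DH - (p+1)/2 * (DT * (((N:ℝ)-2) - T) + T * (0 - DT)))) := by
    apply (hasDerivAt_iff_tendsto_slope.mp hBd).mono_left
    apply nhdsWithin_mono
    intro y hy
    exact (ne_of_lt hy : y ≠ rs)
  have hb'le : DH - (p+1)/2 * (DT * (((N:ℝ)-2) - T) + T * (0 - DT)) ≤ 0 := by
    refine le_of_tendsto hslope ?_
    filter_upwards [Ioo_mem_nhdsLT_of_mem (⟨hrs0, le_refl rs⟩ : rs ∈ Ioc 0 rs)] with x hx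
    have h1 : 0 < BB N α p u x := hleft x hx.1 hx.2
    have h2 : x - rs < 0 := by linarith [hx.2]
    rw [slope_def_field]
    rw [hB0]
    apply le_of_lt
    apply div_neg_of_pos_of_neg (by linarith) h2
  linarith


theorem DTpos (P : Pack N α p u) {r : ℝ} (hr : r ∈ Ioo (0:ℝ) 1) :
    0 < (hh α p u r + TT u r^2 - ((N:ℝ)-2) * TT u r) / r := by
  apply div_pos _ hr.1
  have hB := P.Bpos r hr
  simp only [BB] at hB
  have hT := P.Tpos hr
  have hK : (1:ℝ) ≤ (p+1)/2 := by linarith [P.hp1]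
  by_cases hcase : TT u r ≤ (N:ℝ)-2
  · nlinarith [mul_nonneg (le_of_lt hT) (sub_nonneg.mpr hcase)]
  · push_neg at hcase
    have hh0 := P.hpos hr
    nlinarith [mul_pos hT (sub_pos.mpr hcase)]

theorem Tsmono (P : Pack N α p u) : StrictMonoOn (TT u) (Ioo (0:ℝ) 1) := by
  apply strictMonoOn_of_deriv_pos (convex_Ioo 0 1)
    (P.TcontOn.mono (fun x hx => ⟨le_of_lt hx.1, hx.2⟩))
  intro x hx
  rw [interior_Ioo] at hx
  rw [(P.Tderiv hx).deriv]
  exact P.DTpos hx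

theorem γpos (P : Pack N α p u) : 0 < γγ α p :=
  div_pos (by linarith [P.hα]) P.hp1

theorem exists_r0 (P : Pack N α p u) : ∃ r₀ ∈ Ioo (0:ℝ) 1,
    TT u r₀ = γγ α p ∧ (∀ x ∈ Ioo (0:ℝ) 1, x < r₀ → TT u x < γγ α p) ∧
    (∀ x ∈ Ioo (0:ℝ) 1, r₀ < x → γγ α p < TT u x) := by
  have hγ := P.γpos
  -- a point where T < γ
  have hcont0 : ContinuousAt (TT u) 0 := by
    apply ContinuousAt.div
    · exact ((continuous_id.mul P.u'cont).neg).continuousAt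
    · exact P.ucont.continuousAt
    · exact ne_of_gt (P.hupos 0 ⟨le_refl 0, by norm_num⟩)
  have hT00 : TT u 0 = 0 := by simp [TT]
  have hev0 : ∀ᶠ x in 𝓝 (0:ℝ), TT u x < γγ α p := by
    apply hcont0.eventually_lt_const
    rw [hT00]; exact hγ
  obtain ⟨δ₁, hδ₁pos, hδ₁⟩ := Metric.eventually_nhds_iff.mp hev0
  set x₁ := min (δ₁/2) (1/2) with hx₁def
  have hx₁I : x₁ ∈ Ioo (0:ℝ) 1 := by
    constructor
    · apply lt_min (by linarith) (by norm_num)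
    · exact lt_of_le_of_lt (min_le_right _ _) (by norm_num)
  have hTx₁ : TT u x₁ < γγ α p := by
    apply hδ₁
    rw [Real.dist_eq, sub_zero, abs_of_pos hx₁I.1]
    exact lt_of_le_of_lt (min_le_left _ _) (by linarith)
  -- a point where T > γ
  have hm : 0 < -deriv u 1 := by linarith [P.u'neg (by norm_num : (0:ℝ) < 1) (le_refl 1)]
  set m := -deriv u 1 with hmdef
  have hg : ContinuousAt (fun x => -(x * deriv u x)) 1 :=
    ((continuous_id.mul P.u'cont).neg).continuousAt
  have hg1 : -(1 * deriv u 1) = m := by rw [hmdef]; ring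
  have hev1 : ∀ᶠ x in 𝓝 (1:ℝ), m/2 < -(x * deriv u x) := by
    apply hg.eventually_const_lt
    show m/2 < -(1 * deriv u 1)
    rw [hg1]; linarith
  have hev2 : ∀ᶠ x in 𝓝 (1:ℝ), u x < m/2 / (γγ α p + 1) := by
    apply P.ucont.continuousAt.eventually_lt_const
    rw [P.hu1]
    positivity
  obtain ⟨δ₂, hδ₂pos, hδ₂⟩ := Metric.eventually_nhds_iff.mp (hev1.and hev2)
  set x₂ := max (1 - δ₂/2) ((x₁+1)/2) with hx₂def
  have hx₂I : x₂ ∈ Ioo (0:ℝ) 1 := by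
    constructor
    · apply lt_of_lt_of_le _ (le_max_right _ _); linarith [hx₁I.1]
    · apply max_lt (by linarith) (by linarith [hx₁I.2])
  have hx₁₂ : x₁ < x₂ := lt_of_lt_of_le (by linarith [hx₁I.2]) (le_max_right _ _)
  have hδx₂ : dist x₂ 1 < δ₂ := by
    rw [Real.dist_eq, abs_of_nonpos (by linarith [hx₂I.2])]
    have : 1 - δ₂/2 ≤ x₂ := le_max_left _ _
    linarith
  obtain ⟨hgx₂, hux₂⟩ := hδ₂ hδx₂
  have hux₂pos : 0 < u x₂ := P.hupos x₂ ⟨le_of_lt hx₂I.1, hx₂I.2⟩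
  have hTx₂ : γγ α p < TT u x₂ := by
    have h1 : (γγ α p + 1) * u x₂ < m/2 := by
      rw [← lt_div_iff₀' (by positivity)]
      exact hux₂
    have h2 : γγ α p + 1 ≤ (-(x₂ * deriv u x₂)) / u x₂ := by
      rw [le_div_iff₀ hux₂pos]
      nlinarith
    simp only [TT]
    linarith
  -- IVT
  have hIcc : Icc x₁ x₂ ⊆ Ioo (0:ℝ) 1 := fun x hx =>
    ⟨lt_of_lt_of_le hx₁I.1 hx.1, lt_of_le_of_lt hx.2 hx₂I.2⟩
  have hIVT := intermediate_value_Icc (le_of_lt hx₁₂)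
    ((P.TcontOn.mono (fun x hx => ⟨le_of_lt hx.1, hx.2⟩)).mono hIcc)
  have hγmem : γγ α p ∈ Icc (TT u x₁) (TT u x₂) := ⟨le_of_lt hTx₁, le_of_lt hTx₂⟩
  obtain ⟨r₀, hr₀mem, hTr₀⟩ := hIVT hγmem
  have hr₀I : r₀ ∈ Ioo (0:ℝ) 1 := hIcc hr₀mem
  refine ⟨r₀, hr₀I, hTr₀, ?_, ?_⟩
  · intro x hx hxlt
    rw [← hTr₀]
    exact P.Tsmono hx hr₀I hxlt
  · intro x hx hxgt
    rw [← hTr₀]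
    exact P.Tsmono hr₀I hx hxgt


theorem γeq (P : Pack N α p u) : (p-1) * γγ α p = 2 + α := by
  simp only [γγ]
  field_simp [P.hp1.ne']

theorem u''cont (P : Pack N α p u) : Continuous (deriv (deriv u)) :=
  P.u'contdiff.continuous_deriv (le_refl 1)

theorem wderiv (P : Pack N α p u) (r : ℝ) :
    HasDerivAt (ww α p u)
      (γγ α p * deriv u r + (deriv u r + r * deriv (deriv u) r)) r := by
  have h1 : HasDerivAt (fun s => γγ α p * u s) (γγ α p * deriv u r) r :=
    ((P.udiff r).hasDerivAt).const_mul _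
  have h2 : HasDerivAt (fun s => s * deriv u s)
      (deriv u r + r * deriv (deriv u) r) r := by
    have := (hasDerivAt_id r).mul ((P.u'diff r).hasDerivAt)
    simp only [id_eq] at this
    refine this.congr_deriv ?_
    ring
  exact h1.add h2

theorem w'cont (P : Pack N α p u) : Continuous (deriv (ww α p u)) := by
  have : deriv (ww α p u)
      = fun r => γγ α p * deriv u r + (deriv u r + r * deriv (deriv u) r) := by
    funext r
    exact (P.wderiv r).deriv
  rw [this]
  exact ((continuous_const.mul P.u'cont).add (P.u'cont.add (continuous_id.mul P.u''cont)))

theorem wwcont (P : Pack N α p u) : Continuous (ww α p u) :=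
  (continuous_const.mul P.ucont).add (continuous_id.mul P.u'cont)

theorem ww_eq (P : Pack N α p u) {r : ℝ} (hr : r ∈ Ioo (0:ℝ) 1) :
    ww α p u r = u r * (γγ α p - TT u r) := by
  have hu0 := P.upos hr
  simp only [ww, TT]
  field_simp
  ring

theorem zeq (P : Pack N α p u) {r : ℝ} (hr : r ∈ Ioo (0:ℝ) 1) :
    ZZ N α p u r = (γγ α p + 2 - (N:ℝ)) * EE N u r - r ^ ((N:ℝ)+α) * u r ^ p := by
  have hr0 : (0:ℝ) < r := hr.1
  have hode := P.odeExpand hr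
  have e1 : r ^ ((N:ℝ)-1-1) = r ^ ((N:ℝ)-1) / r := Real.rpow_sub_one (ne_of_gt hr0) _
  have e2 : r ^ ((N:ℝ)+α) = r ^ ((N:ℝ)-1+α) * r := by
    rw [show ((N:ℝ)+α) = ((N:ℝ)-1+α)+1 by ring, Real.rpow_add_one (ne_of_gt hr0)]
  simp only [ZZ, EE]
  rw [(P.wderiv r).deriv]
  rw [e1] at hode
  simp only [RHS] at hode
  rw [e2]
  have hrc : (0:ℝ) < r ^ ((N:ℝ)-1) := Real.rpow_pos_of_pos hr0 _
  -- solve hode for the second-derivative term and substitute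
  have hdd : r ^ ((N:ℝ)-1) * deriv (deriv u) r
      = -(r ^ ((N:ℝ)-1+α) * u r ^ p) - ((N:ℝ)-1) * (r ^ ((N:ℝ)-1) / r) * deriv u r := by
    linarith [hode]
  have expand : r ^ ((N:ℝ)-1) * (γγ α p * deriv u r + (deriv u r + r * deriv (deriv u) r))
      = (γγ α p + 1) * (r ^ ((N:ℝ)-1) * deriv u r) + r * (r ^ ((N:ℝ)-1) * deriv (deriv u) r) := by
    ring
  rw [expand, hdd]
  field_simp
  ring

theorem Zderiv (P : Pack N α p u) {r : ℝ} (hr : r ∈ Ioo (0:ℝ) 1) :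
    HasDerivAt (ZZ N α p u)
      (-(p * (r ^ ((N:ℝ)-1+α) * u r ^ (p-1) * ww α p u r))) r := by
  have hr0 : (0:ℝ) < r := hr.1
  have hu0 := P.upos hr
  have hF : HasDerivAt (fun s => (γγ α p + 2 - (N:ℝ)) * EE N u s - s ^ ((N:ℝ)+α) * u s ^ p)
      ((γγ α p + 2 - (N:ℝ)) * (-(RHS N α p u r))
        - ((((N:ℝ)+α) * r ^ (((N:ℝ)+α)-1)) * u r ^ p
          + r ^ ((N:ℝ)+α) * (deriv u r * p * u r ^ (p-1)))) r := by
    apply HasDerivAt.sub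
    · exact (P.EEderiv r hr).const_mul _
    · exact (Real.hasDerivAt_rpow_const (Or.inl (ne_of_gt hr0))).mul
        (HasDerivAt.rpow_const ((P.udiff r).hasDerivAt) (Or.inl (ne_of_gt hu0)))
  have hZF : HasDerivAt (ZZ N α p u)
      ((γγ α p + 2 - (N:ℝ)) * (-(RHS N α p u r))
        - ((((N:ℝ)+α) * r ^ (((N:ℝ)+α)-1)) * u r ^ p
          + r ^ ((N:ℝ)+α) * (deriv u r * p * u r ^ (p-1)))) r := by
    apply hF.congr_of_eventuallyEq
    filter_upwards [Ioo_mem_nhds hr.1 hr.2] with x hx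
    exact P.zeq hx
  convert hZF using 1
  have e1 : r ^ (((N:ℝ)+α)-1) = r ^ ((N:ℝ)-1+α) := by
    rw [show (((N:ℝ)+α)-1) = ((N:ℝ)-1+α) by ring]
  have e2 : r ^ ((N:ℝ)+α) = r ^ ((N:ℝ)-1+α) * r := by
    rw [show ((N:ℝ)+α) = ((N:ℝ)-1+α)+1 by ring, Real.rpow_add_one (ne_of_gt hr0)]
  have e3 : u r ^ p = u r ^ (p-1) * u r := by
    rw [← Real.rpow_add_one (ne_of_gt hu0) (p-1)]; norm_num
  have hγ := P.γeq
  simp only [RHS, ww]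
  rw [e1, e2, e3]
  linear_combination (-(r ^ ((N:ℝ)-1+α) * u r ^ (p-1) * u r)) * hγ


/-- Core inequality: if `g` vanishes at `r₀` (the zero of `w`) and at `1`, then the
linearized quadratic form is nonnegative at `g`. -/
theorem hardy (P : Pack N α p u) {r₀ : ℝ} (hr₀ : r₀ ∈ Ioo (0:ℝ) 1)
    (hT : TT u r₀ = γγ α p)
    (hlt : ∀ x ∈ Ioo (0:ℝ) 1, x < r₀ → TT u x < γγ α p)
    (hgt : ∀ x ∈ Ioo (0:ℝ) 1, r₀ < x → γγ α p < TT u x)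
    {g : ℝ → ℝ} (hg : ContDiff ℝ 1 g) (hg1 : g 1 = 0) (hgr₀ : g r₀ = 0) :
    0 ≤ ∫ r in (0:ℝ)..1,
      (r ^ ((N:ℝ)-1) * (deriv g r)^2
        - p * (r ^ ((N:ℝ)-1+α) * u r ^ (p-1) * (g r)^2)) := by
  have hgc : Continuous g := hg.continuous
  have hgd : Continuous (deriv g) := hg.continuous_deriv le_rfl
  have hgdiff : Differentiable ℝ g := hg.differentiable one_ne_zero
  set Pf : ℝ → ℝ := fun r => r ^ ((N:ℝ)-1) * (deriv g r)^2
      - p * (r ^ ((N:ℝ)-1+α) * u r ^ (p-1) * (g r)^2) with hPf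
  have hPcont : Continuous Pf := by
    apply Continuous.sub
    · exact (cont_rpow _ (le_of_lt P.hc0)).mul (hgd.pow 2)
    · apply continuous_const.mul
      exact ((cont_rpow _ (by have := P.hc0; have := P.hα; linarith)).mul
        (P.ucont_rpow (le_of_lt P.hp1))).mul (hgc.pow 2)
  set IP : ℝ → ℝ := fun x => ∫ t in (0:ℝ)..x, Pf t with hIPdef
  have hIPcont : Continuous IP :=
    intervalIntegral.continuous_primitive (fun a b => hPcont.intervalIntegrable a b) 0
  have hIPd : ∀ x : ℝ, HasDerivAt IP (Pf x) x := primitive_hasDerivAt hPcont 0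
  set f : ℝ → ℝ := fun x => ZZ N α p u x * (g x)^2 / ww α p u x with hfdef
  -- basic sign facts for w
  have hwr₀ : ww α p u r₀ = 0 := by
    rw [P.ww_eq hr₀, hT]; ring
  have hwpos : ∀ x, 0 ≤ x → x < r₀ → 0 < ww α p u x := by
    intro x hx0 hxr
    rcases eq_or_lt_of_le hx0 with h | h
    · have hu00 : 0 < u 0 := P.hupos 0 ⟨le_refl 0, by norm_num⟩
      simp only [ww, ← h]
      have := P.γpos
      nlinarith
    · have hxI : x ∈ Ioo (0:ℝ) 1 := ⟨h, lt_trans hxr hr₀.2⟩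
      rw [P.ww_eq hxI]
      have := hlt x hxI hxr
      have := P.upos hxI
      nlinarith
  have hwneg : ∀ x, r₀ < x → x ≤ 1 → ww α p u x < 0 := by
    intro x hxr hx1
    rcases eq_or_lt_of_le hx1 with h | h
    · have : deriv u 1 < 0 := P.u'neg (by norm_num) (le_refl 1)
      simp only [ww, h, P.hu1]
      simpa using this
    · have hxI : x ∈ Ioo (0:ℝ) 1 := ⟨lt_trans hr₀.1 hxr, h⟩
      rw [P.ww_eq hxI]
      have := hgt x hxI hxr
      have := P.upos hxI
      nlinarith
  have hZcont : Continuous (ZZ N α p u) :=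
    (cont_rpow _ (le_of_lt P.hc0)).mul P.w'cont
  -- derivative of the boundary-term function f away from r₀
  have hfd : ∀ x ∈ Ioo (0:ℝ) 1, ww α p u x ≠ 0 →
      ∃ d, HasDerivAt f d x ∧ 0 ≤ Pf x - d := by
    intro x hx hwne
    have hu0 := P.upos hx
    have hn : HasDerivAt (fun y => ZZ N α p u y * (g y)^2)
        (-(p * (x ^ ((N:ℝ)-1+α) * u x ^ (p-1) * ww α p u x)) * (g x)^2
          + ZZ N α p u x * ((2:ℕ) * g x ^ (2-1) * deriv g x)) x :=
      (P.Zderiv hx).mul ((hgdiff x).hasDerivAt.pow 2)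
    have hwd : HasDerivAt (ww α p u) (deriv (ww α p u) x) x :=
      ((P.wderiv x).differentiableAt).hasDerivAt
    have hd := hn.div hwd hwne
    refine ⟨_, hd, ?_⟩
    have hkey : Pf x
        - ((-(p * (x ^ ((N:ℝ)-1+α) * u x ^ (p-1) * ww α p u x)) * (g x)^2
          + ZZ N α p u x * ((2:ℕ) * g x ^ (2-1) * deriv g x)) * ww α p u x
          - (ZZ N α p u x * (g x)^2) * deriv (ww α p u) x) / (ww α p u x)^2
        = x ^ ((N:ℝ)-1)
          * (deriv g x - deriv (ww α p u) x * g x / ww α p u x)^2 := by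
      simp only [hPf, ZZ]
      field_simp
      ring
    rw [hkey]
    exact mul_nonneg (Real.rpow_nonneg (le_of_lt hx.1) _) (sq_nonneg _)
  -- left monotonicity
  have hleft : ∀ b ∈ Ioo (0:ℝ) r₀, 0 ≤ IP b - f b := by
    intro b hb
    have hb1 : b < 1 := lt_trans hb.2 hr₀.2
    have hmono : MonotoneOn (fun x => IP x - f x) (Icc 0 b) := by
      apply monoIcc
      · apply ContinuousOn.sub hIPcont.continuousOn
        apply ContinuousOn.div ((hZcont.mul (hgc.pow 2)).continuousOn)
          (P.wwcont.continuousOn)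
        intro x hxm
        exact ne_of_gt (hwpos x hxm.1 (lt_of_le_of_lt hxm.2 hb.2))
      · intro x hxm
        have hxI : x ∈ Ioo (0:ℝ) 1 := ⟨hxm.1, lt_trans (lt_trans hxm.2 hb.2) hr₀.2⟩
        have hwne : ww α p u x ≠ 0 := ne_of_gt (hwpos x (le_of_lt hxm.1) (lt_trans hxm.2 hb.2))
        obtain ⟨d, hd, hd0⟩ := hfd x hxI hwne
        exact ⟨Pf x - d, (hIPd x).sub hd, hd0⟩
    have h0b : (0:ℝ) ∈ Icc (0:ℝ) b := ⟨le_refl 0, le_of_lt hb.1⟩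
    have hbb : b ∈ Icc (0:ℝ) b := ⟨le_of_lt hb.1, le_refl b⟩
    have := hmono h0b hbb (le_of_lt hb.1)
    have hIP0 : IP 0 = 0 := intervalIntegral.integral_same
    have hf0 : f 0 = 0 := by
      simp only [hfdef, ZZ]
      rw [Real.zero_rpow (ne_of_gt P.hc0)]
      ring
    simpa [hIP0, hf0] using this
  -- right monotonicity
  have hright : ∀ a ∈ Ioo r₀ (1:ℝ), IP a - f a ≤ IP 1 := by
    intro a ha
    have ha0 : 0 < a := lt_trans hr₀.1 ha.1
    have hmono : MonotoneOn (fun x => IP x - f x) (Icc a 1) := by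
      apply monoIcc
      · apply ContinuousOn.sub hIPcont.continuousOn
        apply ContinuousOn.div ((hZcont.mul (hgc.pow 2)).continuousOn)
          (P.wwcont.continuousOn)
        intro x hxm
        exact ne_of_lt (hwneg x (lt_of_lt_of_le ha.1 hxm.1) hxm.2)
      · intro x hxm
        have hxI : x ∈ Ioo (0:ℝ) 1 := ⟨lt_trans ha0 hxm.1, hxm.2⟩
        have hwne : ww α p u x ≠ 0 :=
          ne_of_lt (hwneg x (lt_trans ha.1 hxm.1) (le_of_lt hxm.2))
        obtain ⟨d, hd, hd0⟩ := hfd x hxI hwne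
        exact ⟨Pf x - d, (hIPd x).sub hd, hd0⟩
    have ha1 : a ∈ Icc a (1:ℝ) := ⟨le_refl a, le_of_lt ha.2⟩
    have h11 : (1:ℝ) ∈ Icc a (1:ℝ) := ⟨le_of_lt ha.2, le_refl 1⟩
    have := hmono ha1 h11 (le_of_lt ha.2)
    have hf1 : f 1 = 0 := by
      simp only [hfdef, hg1]
      ring_nf
    simpa [hf1] using this
  -- the boundary term tends to 0 at r₀
  have hw'r₀ : deriv (ww α p u) r₀ < 0 := by
    have hDT := P.DTpos hr₀
    have hprod : HasDerivAt (fun x => u x * (γγ α p - TT u x))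
        (deriv u r₀ * (γγ α p - TT u r₀)
          + u r₀ * (0 - (hh α p u r₀ + TT u r₀^2 - ((N:ℝ)-2) * TT u r₀) / r₀)) r₀ :=
      ((P.udiff r₀).hasDerivAt).mul ((hasDerivAt_const r₀ _).sub (P.Tderiv hr₀))
    have heq : deriv (ww α p u) r₀ = deriv u r₀ * (γγ α p - TT u r₀)
        + u r₀ * (0 - (hh α p u r₀ + TT u r₀^2 - ((N:ℝ)-2) * TT u r₀) / r₀) := by
      apply HasDerivAt.deriv
      apply hprod.congr_of_eventuallyEq
      filter_upwards [Ioo_mem_nhds hr₀.1 hr₀.2] with x hx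
      exact P.ww_eq hx
    rw [hT] at heq hDT
    rw [heq, sub_self, mul_zero, zero_add]
    have hu := P.upos hr₀
    nlinarith [mul_pos hu hDT]
  have hw'ne : deriv (ww α p u) r₀ ≠ 0 := ne_of_lt hw'r₀
  have hslopeg : Tendsto (fun x => g x / (x - r₀)) (𝓝[≠] r₀) (𝓝 (deriv g r₀)) := by
    have h1 := hasDerivAt_iff_tendsto_slope.mp ((hgdiff r₀).hasDerivAt)
    have h2 : slope g r₀ = fun x => g x / (x - r₀) := by
      funext x
      rw [slope_def_field, hgr₀, sub_zero]
    rwa [h2] at h1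
  have hslopew : Tendsto (fun x => ww α p u x / (x - r₀)) (𝓝[≠] r₀)
      (𝓝 (deriv (ww α p u) r₀)) := by
    have h1 := hasDerivAt_iff_tendsto_slope.mp
      (((P.wderiv r₀).differentiableAt).hasDerivAt)
    have h2 : slope (ww α p u) r₀ = fun x => ww α p u x / (x - r₀) := by
      funext x
      rw [slope_def_field, hwr₀, sub_zero]
    rwa [h2] at h1
  have hs3 : Tendsto (fun x => (x - r₀) / ww α p u x) (𝓝[≠] r₀)
      (𝓝 (deriv (ww α p u) r₀)⁻¹) := by
    have := hslopew.inv₀ hw'ne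
    apply this.congr
    intro x
    rw [inv_div]
  have hflim : Tendsto f (𝓝[≠] r₀) (𝓝 0) := by
    have hprod : Tendsto
        (fun x => ZZ N α p u x * (g x / (x - r₀))^2 * ((x - r₀) / ww α p u x) * (x - r₀))
        (𝓝[≠] r₀)
        (𝓝 (ZZ N α p u r₀ * (deriv g r₀)^2 * (deriv (ww α p u) r₀)⁻¹ * 0)) := by
      apply Tendsto.mul
      · apply Tendsto.mul
        · apply Tendsto.mul
          · exact (hZcont.continuousAt).continuousWithinAt.tendsto
          · exact hslopeg.pow 2
        · exact hs3
      · have : Tendsto (fun x : ℝ => x - r₀) (𝓝 r₀) (𝓝 (r₀ - r₀)) :=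
          (continuous_id.sub continuous_const).continuousAt
        rw [sub_self] at this
        exact this.mono_left nhdsWithin_le_nhds
    rw [mul_zero] at hprod
    apply hprod.congr'
    filter_upwards [self_mem_nhdsWithin,
      mem_nhdsWithin_of_mem_nhds (Ioo_mem_nhds hr₀.1 hr₀.2)] with x hx1 hx2
    have hxne : x - r₀ ≠ 0 := sub_ne_zero.mpr hx1
    have hwne : ww α p u x ≠ 0 := by
      rcases lt_or_gt_of_ne (hx1 : x ≠ r₀) with h | h
      · exact ne_of_gt (hwpos x (le_of_lt hx2.1) h)
      · exact ne_of_lt (hwneg x h (le_of_lt hx2.2))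
    simp only [hfdef]
    field_simp
  -- conclude : IP r₀ ≥ 0 and IP 1 ≥ IP r₀
  have hIPr₀ : 0 ≤ IP r₀ := by
    have htd : Tendsto (fun b => IP b - f b) (𝓝[<] r₀) (𝓝 (IP r₀ - 0)) := by
      apply Tendsto.sub
      · exact (hIPcont.continuousAt).continuousWithinAt.tendsto
      · exact hflim.mono_left (nhdsWithin_mono _ (fun y hy => (ne_of_lt hy : y ≠ r₀)))
    rw [sub_zero] at htd
    apply ge_of_tendsto htd
    filter_upwards [Ioo_mem_nhdsLT_of_mem (⟨hr₀.1, le_refl r₀⟩ : r₀ ∈ Ioc 0 r₀)] with b hb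
    exact hleft b hb
  have hIP1 : IP r₀ ≤ IP 1 := by
    have htd : Tendsto (fun a => IP a - f a) (𝓝[>] r₀) (𝓝 (IP r₀ - 0)) := by
      apply Tendsto.sub
      · exact (hIPcont.continuousAt).continuousWithinAt.tendsto
      · exact hflim.mono_left (nhdsWithin_mono _ (fun y hy => (ne_of_gt hy : y ≠ r₀)))
    rw [sub_zero] at htd
    apply le_of_tendsto htd
    filter_upwards [Ioo_mem_nhdsGT_of_mem (⟨le_refl r₀, hr₀.2⟩ : r₀ ∈ Ico r₀ 1)] with a ha
    exact hright a ha
  calc (0:ℝ) ≤ IP r₀ := hIPr₀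
    _ ≤ IP 1 := hIP1


theorem pw1 (P : Pack N α p u) {r : ℝ} (hr : r ∈ Icc (0:ℝ) 1) :
    u r ^ (p-1) * u r = u r ^ p := by
  rcases eq_or_lt_of_le (P.unonneg hr) with h | h
  · rw [← h, Real.zero_rpow (ne_of_gt P.hp1), Real.zero_rpow (ne_of_gt P.hp0)]
    ring
  · rw [Real.rpow_sub_one (ne_of_gt h)]
    field_simp

theorem pw3 (P : Pack N α p u) {r : ℝ} (hr : r ∈ Icc (0:ℝ) 1) :
    u r ^ p * u r = u r ^ (p+1) := by
  rcases eq_or_lt_of_le (P.unonneg hr) with h | h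
  · rw [← h, Real.zero_rpow (ne_of_gt P.hp0), Real.zero_rpow (ne_of_gt (by linarith [P.hp0] : (0:ℝ) < p+1))]
    ring
  · rw [Real.rpow_add_one (ne_of_gt h) p]

theorem pw2 (P : Pack N α p u) {r : ℝ} (hr : r ∈ Icc (0:ℝ) 1) :
    u r ^ (p-1) * (u r * u r) = u r ^ (p+1) := by
  rw [← mul_assoc, P.pw1 hr, P.pw3 hr]

/-- weak form of the Euler–Lagrange equation -/
theorem weakEL (P : Pack N α p u) {v : ℝ → ℝ} (hv : ContDiff ℝ 1 v) (hv1 : v 1 = 0) :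
    (∫ r in (0:ℝ)..1, r ^ ((N:ℝ)-1) * deriv u r * deriv v r)
      = ∫ r in (0:ℝ)..1, r ^ ((N:ℝ)-1+α) * u r ^ p * v r := by
  have hvc : Continuous v := hv.continuous
  have hvd : Continuous (deriv v) := hv.continuous_deriv le_rfl
  have hvdiff : Differentiable ℝ v := hv.differentiable one_ne_zero
  set G : ℝ → ℝ := fun r => r ^ ((N:ℝ)-1) * deriv u r * deriv v r
      - r ^ ((N:ℝ)-1+α) * u r ^ p * v r with hGdef
  have hG1 : Continuous fun r : ℝ => r ^ ((N:ℝ)-1) * deriv u r * deriv v r :=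
    ((cont_rpow _ (le_of_lt P.hc0)).mul P.u'cont).mul hvd
  have hG2 : Continuous fun r : ℝ => r ^ ((N:ℝ)-1+α) * u r ^ p * v r :=
    ((cont_rpow _ (by have := P.hc0; have := P.hα; linarith)).mul
      (P.ucont_rpow (le_of_lt P.hp0))).mul hvc
  have hGcont : Continuous G := hG1.sub hG2
  have key : ∀ x ∈ Icc (0:ℝ) 1,
      (∫ t in (0:ℝ)..x, G t) - EE N u x * v x
        = (∫ t in (0:ℝ)..(0:ℝ), G t) - EE N u 0 * v 0 := by
    apply constIcc
    · exact ((intervalIntegral.continuous_primitive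
        (fun a b => hGcont.intervalIntegrable a b) 0).sub
        (P.EEcont.mul hvc)).continuousOn
    · intro x hx
      have h1 := (primitive_hasDerivAt hGcont 0 x).sub
        ((P.EEderiv x hx).mul ((hvdiff x).hasDerivAt))
      refine h1.congr_deriv ?_
      simp only [hGdef, EE, RHS]
      ring
  have h2 := key 1 ⟨by norm_num, le_refl 1⟩
  have hEE0 : EE N u 0 = 0 := by
    simp only [EE]
    rw [Real.zero_rpow (ne_of_gt P.hc0)]
    ring
  rw [intervalIntegral.integral_same, hEE0, hv1] at h2
  simp only [mul_zero, zero_mul, sub_zero, zero_sub, neg_zero] at h2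
  have h3 : (∫ t in (0:ℝ)..1, G t)
      = (∫ r in (0:ℝ)..1, r ^ ((N:ℝ)-1) * deriv u r * deriv v r)
        - ∫ r in (0:ℝ)..1, r ^ ((N:ℝ)-1+α) * u r ^ p * v r :=
    intervalIntegral.integral_sub (hG1.intervalIntegrable 0 1) (hG2.intervalIntegrable 0 1)
  rw [h3] at h2
  linarith


end Pack
end Stmt11Aux

open Stmt11Aux

theorem stmt_11 (N : ℕ) (hN : 3 ≤ N) (α p : ℝ) (hα : 0 < α) (hp : 1 < p)
    (hpα : p < ((N : ℝ) + 2 + 2 * α) / ((N : ℝ) - 2))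
    (u : ℝ → ℝ) (hu : ContDiff ℝ 2 u)
    (hODE : ∀ r ∈ Ioo (0:ℝ) 1,
      deriv (fun s => s ^ ((N:ℝ) - 1) * deriv u s) r = -(r ^ ((N:ℝ) - 1 + α) * u r ^ p))
    (hu'0 : deriv u 0 = 0) (hu1 : u 1 = 0)
    (hupos : ∀ r ∈ Ico (0:ℝ) 1, 0 < u r) :
    ∀ v : ℝ → ℝ, ContDiff ℝ 1 v → v 1 = 0 →
      (∫ r in (0:ℝ)..1, r ^ ((N:ℝ) - 1) * (deriv v r) ^ 2)
        - p * (∫ r in (0:ℝ)..1, r ^ ((N:ℝ) - 1 + α) * u r ^ (p - 1) * v r ^ 2)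
        + (p - 1) * (∫ r in (0:ℝ)..1, r ^ ((N:ℝ) - 1 + α) * u r ^ p * v r) ^ 2
            / (∫ r in (0:ℝ)..1, r ^ ((N:ℝ) - 1 + α) * u r ^ (p + 1)) ≥ 0 := by
  intro v hv hv1
  have P : Pack N α p u := ⟨hN, hα, hp, hpα, hu, hODE, hu'0, hu1, hupos⟩
  have hvc : Continuous v := hv.continuous
  have hvd : Continuous (deriv v) := hv.continuous_deriv le_rfl
  have hvdiff : Differentiable ℝ v := hv.differentiable one_ne_zero
  obtain ⟨r₀, hr₀, hT, hlt, hgt⟩ := P.exists_r0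
  have hur₀ : 0 < u r₀ := P.upos hr₀
  set t : ℝ := -(v r₀ / u r₀) with htdef
  set g : ℝ → ℝ := fun r => v r + t * u r with hgdef
  have hu1' : ContDiff ℝ 1 u := P.hu.of_le (by norm_num)
  have hgC1 : ContDiff ℝ 1 g := hv.add (contDiff_const.mul hu1')
  have hg1 : g 1 = 0 := by simp [hgdef, hv1, P.hu1]
  have hgr₀ : g r₀ = 0 := by
    simp only [hgdef, htdef]
    field_simp
    ring
  have hgderiv : ∀ r, deriv g r = deriv v r + t * deriv u r := by
    intro r
    exact (((hvdiff r).hasDerivAt).add (((P.udiff r).hasDerivAt).const_mul t)).deriv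
  have hgd : Continuous (deriv g) := hgC1.continuous_deriv le_rfl
  have hgc : Continuous g := hgC1.continuous
  -- continuity of all the integrands
  have hcRp : Continuous fun r : ℝ => r ^ ((N:ℝ)-1) := cont_rpow _ (le_of_lt P.hc0)
  have hcX : Continuous fun r : ℝ => r ^ ((N:ℝ)-1+α) :=
    cont_rpow _ (by have := P.hc0; have := P.hα; linarith)
  have hf1 : Continuous fun r : ℝ => r ^ ((N:ℝ)-1) * deriv v r ^ 2 := hcRp.mul (hvd.pow 2)
  have hf2 : Continuous fun r : ℝ => r ^ ((N:ℝ)-1) * deriv u r * deriv v r :=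
    (hcRp.mul P.u'cont).mul hvd
  have hf3 : Continuous fun r : ℝ => r ^ ((N:ℝ)-1) * deriv u r * deriv u r :=
    (hcRp.mul P.u'cont).mul P.u'cont
  have hf4 : Continuous fun r : ℝ => r ^ ((N:ℝ)-1+α) * u r ^ (p-1) * v r ^ 2 :=
    (hcX.mul (P.ucont_rpow (le_of_lt P.hp1))).mul (hvc.pow 2)
  have hf5 : Continuous fun r : ℝ => r ^ ((N:ℝ)-1+α) * u r ^ p * v r :=
    (hcX.mul (P.ucont_rpow (le_of_lt P.hp0))).mul hvc
  have hf6 : Continuous fun r : ℝ => r ^ ((N:ℝ)-1+α) * u r ^ (p+1) :=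
    hcX.mul (P.ucont_rpow (by linarith [P.hp0]))
  have hf7 : Continuous fun r : ℝ => r ^ ((N:ℝ)-1+α) * u r ^ (p-1) * g r ^ 2 :=
    (hcX.mul (P.ucont_rpow (le_of_lt P.hp1))).mul (hgc.pow 2)
  have hf8 : Continuous fun r : ℝ => r ^ ((N:ℝ)-1) * deriv g r ^ 2 := hcRp.mul (hgd.pow 2)
  have hf5u : Continuous fun r : ℝ => r ^ ((N:ℝ)-1+α) * u r ^ p * u r :=
    (hcX.mul (P.ucont_rpow (le_of_lt P.hp0))).mul P.ucont
  -- positivity of the denominator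
  have hM : 0 < ∫ r in (0:ℝ)..1, r ^ ((N:ℝ)-1+α) * u r ^ (p+1) := by
    apply intervalIntegral_pos_of_pos_on (hf6.intervalIntegrable 0 1) _ (by norm_num)
    intro x hx
    exact mul_pos (Real.rpow_pos_of_pos hx.1 _)
      (Real.rpow_pos_of_pos (P.upos hx) _)
  -- weak EL identities
  have hELv : (∫ r in (0:ℝ)..1, r ^ ((N:ℝ)-1) * deriv u r * deriv v r)
      = ∫ r in (0:ℝ)..1, r ^ ((N:ℝ)-1+α) * u r ^ p * v r := P.weakEL hv hv1
  have hELu : (∫ r in (0:ℝ)..1, r ^ ((N:ℝ)-1) * deriv u r * deriv u r)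
      = ∫ r in (0:ℝ)..1, r ^ ((N:ℝ)-1+α) * u r ^ (p+1) := by
    rw [P.weakEL hu1' P.hu1]
    apply intervalIntegral.integral_congr
    intro r hr
    rw [uIcc_of_le (by norm_num : (0:ℝ) ≤ 1)] at hr
    simp only
    rw [mul_assoc, P.pw3 hr]
  -- expansion of the three g-integrals
  have hAg : (∫ r in (0:ℝ)..1, r ^ ((N:ℝ)-1) * deriv g r ^ 2)
      = (∫ r in (0:ℝ)..1, r ^ ((N:ℝ)-1) * deriv v r ^ 2)
        + ((2*t) * (∫ r in (0:ℝ)..1, r ^ ((N:ℝ)-1+α) * u r ^ p * v r)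
          + t^2 * (∫ r in (0:ℝ)..1, r ^ ((N:ℝ)-1+α) * u r ^ (p+1))) := by
    have e : (fun r : ℝ => r ^ ((N:ℝ)-1) * deriv g r ^ 2)
        = fun r : ℝ => r ^ ((N:ℝ)-1) * deriv v r ^ 2
          + ((2*t) * (r ^ ((N:ℝ)-1) * deriv u r * deriv v r)
            + t^2 * (r ^ ((N:ℝ)-1) * deriv u r * deriv u r)) := by
      funext r
      rw [hgderiv r]
      ring
    rw [e, intervalIntegral.integral_add (hf1.intervalIntegrable 0 1)
      (((hf2.const_mul _).fun_add (hf3.const_mul _)).intervalIntegrable 0 1),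
      intervalIntegral.integral_add ((hf2.const_mul _).intervalIntegrable 0 1)
        ((hf3.const_mul _).intervalIntegrable 0 1),
      intervalIntegral.integral_const_mul, intervalIntegral.integral_const_mul,
      hELv, hELu]
  have hBg : (∫ r in (0:ℝ)..1, r ^ ((N:ℝ)-1+α) * u r ^ (p-1) * g r ^ 2)
      = (∫ r in (0:ℝ)..1, r ^ ((N:ℝ)-1+α) * u r ^ (p-1) * v r ^ 2)
        + ((2*t) * (∫ r in (0:ℝ)..1, r ^ ((N:ℝ)-1+α) * u r ^ p * v r)
          + t^2 * (∫ r in (0:ℝ)..1, r ^ ((N:ℝ)-1+α) * u r ^ (p+1))) := by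
    have e : EqOn (fun r : ℝ => r ^ ((N:ℝ)-1+α) * u r ^ (p-1) * g r ^ 2)
        (fun r : ℝ => r ^ ((N:ℝ)-1+α) * u r ^ (p-1) * v r ^ 2
          + ((2*t) * (r ^ ((N:ℝ)-1+α) * u r ^ p * v r)
            + t^2 * (r ^ ((N:ℝ)-1+α) * u r ^ (p+1)))) (uIcc 0 1) := by
      intro r hr
      rw [uIcc_of_le (by norm_num : (0:ℝ) ≤ 1)] at hr
      have e1 := P.pw1 hr
      have e2 := P.pw2 hr
      simp only [hgdef]
      linear_combination (2*t*(v r)*(r ^ ((N:ℝ)-1+α))) * e1 + (t^2*(r ^ ((N:ℝ)-1+α))) * e2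
    rw [intervalIntegral.integral_congr e,
      intervalIntegral.integral_add (hf4.intervalIntegrable 0 1)
      (((hf5.const_mul _).fun_add (hf6.const_mul _)).intervalIntegrable 0 1),
      intervalIntegral.integral_add ((hf5.const_mul _).intervalIntegrable 0 1)
        ((hf6.const_mul _).intervalIntegrable 0 1),
      intervalIntegral.integral_const_mul, intervalIntegral.integral_const_mul]
  have hCg : (∫ r in (0:ℝ)..1, r ^ ((N:ℝ)-1+α) * u r ^ p * g r)
      = (∫ r in (0:ℝ)..1, r ^ ((N:ℝ)-1+α) * u r ^ p * v r)
        + t * (∫ r in (0:ℝ)..1, r ^ ((N:ℝ)-1+α) * u r ^ (p+1)) := by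
    have e : EqOn (fun r : ℝ => r ^ ((N:ℝ)-1+α) * u r ^ p * g r)
        (fun r : ℝ => r ^ ((N:ℝ)-1+α) * u r ^ p * v r
          + t * (r ^ ((N:ℝ)-1+α) * u r ^ (p+1))) (uIcc 0 1) := by
      intro r hr
      rw [uIcc_of_le (by norm_num : (0:ℝ) ≤ 1)] at hr
      have e3 := P.pw3 hr
      simp only [hgdef]
      linear_combination (t*(r ^ ((N:ℝ)-1+α))) * e3
    rw [intervalIntegral.integral_congr e,
      intervalIntegral.integral_add (hf5.intervalIntegrable 0 1)
        ((hf6.const_mul _).intervalIntegrable 0 1),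
      intervalIntegral.integral_const_mul]
  -- the Hardy inequality applied to g
  have hHardy := P.hardy hr₀ hT hlt hgt hgC1 hg1 hgr₀
  have hsplit : (∫ r in (0:ℝ)..1,
      (r ^ ((N:ℝ)-1) * (deriv g r)^2 - p * (r ^ ((N:ℝ)-1+α) * u r ^ (p-1) * (g r)^2)))
      = (∫ r in (0:ℝ)..1, r ^ ((N:ℝ)-1) * deriv g r ^ 2)
        - p * (∫ r in (0:ℝ)..1, r ^ ((N:ℝ)-1+α) * u r ^ (p-1) * g r ^ 2) := by
    rw [intervalIntegral.integral_sub (hf8.intervalIntegrable 0 1)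
      ((hf7.const_mul _).intervalIntegrable 0 1),
      intervalIntegral.integral_const_mul]
  rw [hsplit] at hHardy
  rw [hAg, hBg] at hHardy
  -- final algebra
  rw [ge_iff_le]
  have halg : (∫ r in (0:ℝ)..1, r ^ ((N:ℝ) - 1) * (deriv v r) ^ 2)
        - p * (∫ r in (0:ℝ)..1, r ^ ((N:ℝ) - 1 + α) * u r ^ (p - 1) * v r ^ 2)
        + (p - 1) * (∫ r in (0:ℝ)..1, r ^ ((N:ℝ) - 1 + α) * u r ^ p * v r) ^ 2
            / (∫ r in (0:ℝ)..1, r ^ ((N:ℝ) - 1 + α) * u r ^ (p + 1))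
      = (((∫ r in (0:ℝ)..1, r ^ ((N:ℝ)-1) * deriv v r ^ 2)
          + ((2*t) * (∫ r in (0:ℝ)..1, r ^ ((N:ℝ)-1+α) * u r ^ p * v r)
            + t^2 * (∫ r in (0:ℝ)..1, r ^ ((N:ℝ)-1+α) * u r ^ (p+1))))
        - p * ((∫ r in (0:ℝ)..1, r ^ ((N:ℝ)-1+α) * u r ^ (p-1) * v r ^ 2)
          + ((2*t) * (∫ r in (0:ℝ)..1, r ^ ((N:ℝ)-1+α) * u r ^ p * v r)
            + t^2 * (∫ r in (0:ℝ)..1, r ^ ((N:ℝ)-1+α) * u r ^ (p+1)))))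
        + (p - 1) * ((∫ r in (0:ℝ)..1, r ^ ((N:ℝ)-1+α) * u r ^ p * v r)
            + t * (∫ r in (0:ℝ)..1, r ^ ((N:ℝ)-1+α) * u r ^ (p+1))) ^ 2
            / (∫ r in (0:ℝ)..1, r ^ ((N:ℝ)-1+α) * u r ^ (p+1)) := by
    field_simp
    ring
  rw [halg]
  apply add_nonneg hHardy
  apply div_nonneg _ (le_of_lt hM)
  apply mul_nonneg (by linarith [P.hp1]) (sq_nonneg _)
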